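/- Let $A$ be a commutative $\mathbb{Q}$-algebra, $D$ a derivation, $E, \Lambda \in A$ with $DE = \Lambda + E^2$. For integers $n \ge 0$ define the Rankin-Cohen bracket of $E$ with itself (with both arguments of weight 2) by $[E,E]_{D,n} := \sum_{j=0}^{n} (-1)^j \frac{(2+j)_{n-j}(2+n-j)_j}{j!\,(n-j)!}\, D^j E\, D^{n-j} E$, where $(x)_m$ is the Pochhammer symbol. Define $\vartheta^{(n)} E := (1 + (-1)^n) D^{n+1} E - (n+2)[E,E]_{D,n}$. Then $\vartheta^{(n)} E$ lies in the subalgebra of $A$ generated by the elements $\Psi_0, \Psi_1, \Psi_2, \ldots$ (defined by $\Psi_0 = 0$, $\Psi_1 = \Lambda$, $\Psi_{j+1} = D\Psi_j - (2j+2)E\Psi_j + j(j+1)\Lambda\Psi_{j-1}$); in fact, for even $n$, $\vartheta^{(n)} E = -(n+2)\sum_{j=0}^{n} (-1)^j \binom{n+1}{n-j}\binom{n+1}{j} \Psi_j \Psi_{n-j} + 2\Psi_{n+1}$, and for odd $n$, $\vartheta^{(n)} E = 0$. -/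

import Mathlib

open Finset

/-- Pochhammer symbol `(x)_m = x(x+1)⋯(x+m-1)` for rational `x`. -/
def poch (x : ℚ) (m : ℕ) : ℚ := ∏ i ∈ Finset.range m, (x + i)


private def bco (m k : ℕ) : ℚ :=
  (Nat.factorial m * Nat.factorial (m + 1) : ℚ) /
    (Nat.factorial (m - 1 - k) * Nat.factorial (k + 1) * Nat.factorial (k + 2))

private lemma fact_cast_ne (n : ℕ) : ((n.factorial : ℚ)) ≠ 0 :=
  Nat.cast_ne_zero.mpr n.factorial_ne_zero

private lemma fact_cast_succ (n : ℕ) : (((n+1).factorial : ℚ)) = (n+1) * n.factorial := by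
  rw [Nat.factorial_succ]; push_cast; ring

private lemma bco_cancel (N k : ℕ) (hk : k < N) :
    bco (N+1) k * ((N - k : ℕ) : ℚ) = bco (N+1) (k+1) * (((k:ℚ)+2) * ((k:ℚ)+3)) := by
  obtain ⟨d, rfl⟩ : ∃ d, N = k + 1 + d := ⟨N - k - 1, by omega⟩
  unfold bco
  have s1 : k + 1 + d + 1 - 1 - k = d + 1 := by omega
  have s2 : k + 1 + d + 1 - 1 - (k + 1) = d := by omega
  have s3 : k + 1 + d - k = d + 1 := by omega
  rw [s1, s2, s3]
  have e1 := fact_cast_succ d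
  have e2 := fact_cast_succ (k+1)
  have e3 := fact_cast_succ (k+2)
  push_cast [e1, e2, e3]
  field_simp
  ring

private lemma bco_diag (N : ℕ) : bco (N+1) N = 1 := by
  unfold bco
  have s1 : N + 1 - 1 - N = 0 := by omega
  rw [s1]
  simp only [Nat.factorial_zero, Nat.cast_one, one_mul]
  rw [div_eq_one_iff_eq (by positivity)]

private lemma bco_zero (N : ℕ) :
    ((N+1).factorial : ℚ) * (((N+1:ℕ):ℚ)+1) + (bco (N+1) 0 * ((N:ℕ) : ℚ) + bco (N+1) 0 * 4)
      = bco (N+2) 0 := by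
  unfold bco
  have s1 : N + 1 - 1 - 0 = N := by omega
  have s2 : N + 2 - 1 - 0 = N + 1 := by omega
  rw [s1, s2]
  have e1 := fact_cast_succ N
  have e2 := fact_cast_succ (N+1)
  have e3 := fact_cast_succ (N+2)
  push_cast [e1, e2, e3]
  field_simp
  ring

private lemma bco_succ (N k : ℕ) (hk : k < N) :
    bco (N+1) k + (bco (N+1) (k+1) * ((N - 1 - k : ℕ) : ℚ)
      + bco (N+1) (k+1) * (2 * ((k:ℚ)+2) + 2)) = bco (N+2) (k+1) := by
  obtain ⟨d, rfl⟩ : ∃ d, N = k + 1 + d := ⟨N - k - 1, by omega⟩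
  unfold bco
  have s1 : k + 1 + d + 1 - 1 - k = d + 1 := by omega
  have s2 : k + 1 + d + 1 - 1 - (k + 1) = d := by omega
  have s3 : k + 1 + d - 1 - k = d := by omega
  have s4 : k + 1 + d + 2 - 1 - (k + 1) = d + 1 := by omega
  rw [s1, s2, s3, s4]
  have e1 := fact_cast_succ d
  have e2 := fact_cast_succ (k+1)
  have e3 := fact_cast_succ (k+2)
  have e4 := fact_cast_succ (k+1+d)
  have e5 := fact_cast_succ (k+1+d+1)
  have e6 := fact_cast_succ (k+1+d+2)
  push_cast [e1, e2, e3, e4, e5, e6]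
  field_simp
  ring

private lemma L1 {A : Type*} [CommRing A] [Algebra ℚ A]
    (D : Derivation ℚ A A) (E Λ : A)
    (hDE : D E = Λ + E ^ 2)
    (Ψ : ℕ → A)
    (hΨ0 : Ψ 0 = 0)
    (hΨ1 : Ψ 1 = Λ)
    (hΨrec : ∀ j : ℕ, Ψ (j + 2) =
      (D (Ψ (j + 1)) - (2 * (j + 1 : ℕ) + 2 : ℚ) • (E * Ψ (j + 1)))
        + (((j + 1 : ℕ) * ((j + 1 : ℕ) + 1) : ℚ) • (Λ * Ψ j))) :
    ∀ m : ℕ, (⇑D)^[m] E = ((m.factorial : ℚ)) • E ^ (m + 1) +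
      ∑ k ∈ Finset.range m, bco m k • (E ^ (m - 1 - k) * Ψ (k + 1)) := by
  have hDΨ : ∀ k : ℕ, D (Ψ (k + 1)) = Ψ (k + 2) + (2 * (k + 1 : ℕ) + 2 : ℚ) • (E * Ψ (k + 1))
      - ((k + 1 : ℕ) * ((k + 1 : ℕ) + 1) : ℚ) • (Λ * Ψ k) := by
    intro k; rw [hΨrec k]; abel
  intro m
  induction m with
  | zero => simp
  | succ m ih =>
    have hterm : ∀ k ∈ Finset.range m, D (bco m k • (E ^ (m - 1 - k) * Ψ (k + 1))) =
        (bco m k * ((m - 1 - k : ℕ) : ℚ)) • (Λ * (E ^ (m - 2 - k) * Ψ (k + 1)))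
        + (bco m k * ((m - 1 - k : ℕ) : ℚ)) • (E ^ (m - k) * Ψ (k + 1))
        + bco m k • (E ^ (m - 1 - k) * Ψ (k + 2))
        + (bco m k * (2 * (k + 1 : ℕ) + 2 : ℚ)) • (E ^ (m - k) * Ψ (k + 1))
        - (bco m k * ((k + 1 : ℕ) * ((k + 1 : ℕ) + 1) : ℚ)) • (Λ * (E ^ (m - 1 - k) * Ψ k)) := by
      intro k hk
      simp only [Finset.mem_range] at hk
      rw [Derivation.map_smul]
      obtain ⟨d, rfl⟩ : ∃ d, m = k + 1 + d := ⟨m - k - 1, by omega⟩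
      have s1 : k + 1 + d - 1 - k = d := by omega
      have s2 : k + 1 + d - k = d + 1 := by omega
      have s3 : k + 1 + d - 2 - k = d - 1 := by omega
      rw [s1, s2, s3, Derivation.leibniz, Derivation.leibniz_pow, hDE, hDΨ k]
      rcases d with _ | c
      · simp only [Nat.zero_eq, pow_zero, Nat.cast_zero, mul_zero, zero_smul, zero_mul,
          Nat.sub_zero, zero_add, one_mul, smul_zero, add_zero, zero_sub, pow_one]
        simp only [smul_eq_mul, nsmul_eq_mul]
        simp only [Algebra.smul_def, map_mul, map_natCast, map_add, map_sub, map_one, map_ofNat]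
        push_cast
        ring
      · simp only [Nat.add_sub_cancel]
        simp only [smul_eq_mul, nsmul_eq_mul]
        simp only [Algebra.smul_def, map_mul, map_natCast, map_add, map_sub, map_one, map_ofNat]
        push_cast
        ring
    have hpow : (m.factorial : ℚ) • D (E ^ (m + 1)) =
        ((m.factorial : ℚ) * ((m : ℚ) + 1)) • (E ^ m * Ψ 1)
        + ((m.factorial : ℚ) * ((m : ℚ) + 1)) • E ^ (m + 2) := by
      rw [Derivation.leibniz_pow, Nat.add_sub_cancel, hDE, ← hΨ1]
      simp only [smul_eq_mul, nsmul_eq_mul]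
      simp only [Algebra.smul_def, map_mul, map_natCast, map_add]
      push_cast
      ring
    rw [Function.iterate_succ_apply', ih, map_add, Derivation.map_smul, map_sum,
      Finset.sum_congr rfl hterm, hpow, Finset.sum_sub_distrib, Finset.sum_add_distrib,
      Finset.sum_add_distrib, Finset.sum_add_distrib]
    rcases m with _ | N
    · norm_num [bco, Nat.factorial]
      abel
    · simp only [show N+1+1 = N+2 from by omega]
      simp only [show ∀ k:ℕ, N+1-1-k = N-k from fun k => by omega,
        show ∀ k:ℕ, N+1-2-k = N-1-k from fun k => by omega,
        show ∀ k:ℕ, N+2-1-k = N+1-k from fun k => by omega,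
        show N+1+2 = N+3 from by omega, show N+2+1 = N+3 from by omega]
      -- boundary coefficient lemmas are proved above; now peel and regroup sums
      have hT15 : (∑ x ∈ Finset.range (N + 1),
            (bco (N + 1) x * ((N - x : ℕ) : ℚ)) • (Λ * (E ^ (N - 1 - x) * Ψ (x + 1))))
          = ∑ x ∈ Finset.range (N + 1),
            (bco (N + 1) x * (((x + 1 : ℕ) : ℚ) * (((x + 1 : ℕ) : ℚ) + 1))) • (Λ * (E ^ (N - x) * Ψ x)) := by
        rw [Finset.sum_range_succ, Finset.sum_range_succ']
        rw [Nat.sub_self]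
        simp only [Nat.cast_zero, mul_zero, zero_smul, add_zero, hΨ0, smul_zero]
        refine Finset.sum_congr rfl (fun k hk => ?_)
        simp only [Finset.mem_range] at hk
        have e1 : N - (k + 1) = N - 1 - k := by omega
        rw [e1]
        congr 1
        have h := bco_cancel N k hk
        push_cast [Nat.cast_sub hk.le] at h ⊢
        linear_combination h
      have hA : (∑ x ∈ Finset.range (N + 1),
            (bco (N + 1) x * ((N - x : ℕ) : ℚ)) • (E ^ (N + 1 - x) * Ψ (x + 1)))
          = (∑ k ∈ Finset.range N,
              (bco (N + 1) (k + 1) * ((N - 1 - k : ℕ) : ℚ)) • (E ^ (N - k) * Ψ (k + 2)))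
            + (bco (N + 1) 0 * ((N : ℕ) : ℚ)) • (E ^ (N + 1) * Ψ 1) := by
        rw [Finset.sum_range_succ']
        refine congrArg₂ HAdd.hAdd (Finset.sum_congr rfl (fun k hk => ?_)) (by norm_num)
        have e1 : N - (k + 1) = N - 1 - k := by omega
        have e2 : N + 1 - (k + 1) = N - k := by omega
        have e3 : k + 1 + 1 = k + 2 := by omega
        rw [e1, e2, e3]
      have hB : (∑ x ∈ Finset.range (N + 1),
            (bco (N + 1) x * (2 * ((x + 1 : ℕ) : ℚ) + 2)) • (E ^ (N + 1 - x) * Ψ (x + 1)))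
          = (∑ k ∈ Finset.range N,
              (bco (N + 1) (k + 1) * (2 * ((k + 2 : ℕ) : ℚ) + 2)) • (E ^ (N - k) * Ψ (k + 2)))
            + (bco (N + 1) 0 * 4) • (E ^ (N + 1) * Ψ 1) := by
        rw [Finset.sum_range_succ']
        refine congrArg₂ HAdd.hAdd (Finset.sum_congr rfl (fun k hk => ?_)) (by norm_num)
        have e2 : N + 1 - (k + 1) = N - k := by omega
        have e3 : k + 1 + 1 = k + 2 := by omega
        rw [e2, e3]
      have hC : (∑ x ∈ Finset.range (N + 1), bco (N + 1) x • (E ^ (N - x) * Ψ (x + 2)))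
          = (∑ k ∈ Finset.range N, bco (N + 1) k • (E ^ (N - k) * Ψ (k + 2))) + Ψ (N + 2) := by
        rw [Finset.sum_range_succ, Nat.sub_self, pow_zero, bco_diag, one_smul, one_mul]
      have hD : (∑ x ∈ Finset.range (N + 2), bco (N + 2) x • (E ^ (N + 1 - x) * Ψ (x + 1)))
          = ((∑ k ∈ Finset.range N, bco (N + 2) (k + 1) • (E ^ (N - k) * Ψ (k + 2))) + Ψ (N + 2))
            + bco (N + 2) 0 • (E ^ (N + 1) * Ψ 1) := by
        rw [Finset.sum_range_succ', Finset.sum_range_succ]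
        refine congrArg₂ HAdd.hAdd (congrArg₂ HAdd.hAdd
          (Finset.sum_congr rfl (fun k hk => ?_))
          (by rw [Nat.sub_self, pow_zero, bco_diag, one_smul, one_mul,
              show N + 1 + 1 = N + 2 from by omega])) (by norm_num)
        have e2 : N + 1 - (k + 1) = N - k := by omega
        have e3 : k + 1 + 1 = k + 2 := by omega
        rw [e2, e3]
      have hsum : (∑ k ∈ Finset.range N, bco (N + 1) k • (E ^ (N - k) * Ψ (k + 2)))
          + ((∑ k ∈ Finset.range N,
              (bco (N + 1) (k + 1) * ((N - 1 - k : ℕ) : ℚ)) • (E ^ (N - k) * Ψ (k + 2)))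
            + (∑ k ∈ Finset.range N,
              (bco (N + 1) (k + 1) * (2 * ((k + 2 : ℕ) : ℚ) + 2)) • (E ^ (N - k) * Ψ (k + 2))))
          = ∑ k ∈ Finset.range N, bco (N + 2) (k + 1) • (E ^ (N - k) * Ψ (k + 2)) := by
        rw [← Finset.sum_add_distrib, ← Finset.sum_add_distrib]
        refine Finset.sum_congr rfl (fun k hk => ?_)
        simp only [Finset.mem_range] at hk
        rw [← add_smul, ← add_smul]
        congr 1
        have h := bco_succ N k hk
        push_cast at h ⊢
        linear_combination h
      rw [hT15, hA, hB, hC, hD, ← hsum]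
      have hfact : ((N + 2).factorial : ℚ) = ((N + 1).factorial : ℚ) * (((N + 1 : ℕ) : ℚ) + 1) := by
        rw [show N + 2 = (N + 1) + 1 from by omega, Nat.factorial_succ]
        push_cast
        ring
      rw [hfact, ← bco_zero N, add_smul, add_smul]
      abel


private lemma neg_pow_mul {A : Type*} [CommRing A] [Algebra ℚ A] (j : ℕ) (x : A) :
    (-1 : A) ^ j * x = ((-1 : ℚ) ^ j) • x := by
  rw [Algebra.smul_def, map_pow, map_neg, map_one]

private lemma coeff_mul_resc {A : Type*} [CommRing A] [Algebra ℚ A]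
    (f : ℕ → A) (hf0 : f 0 = 1) (n : ℕ) :
    (PowerSeries.coeff (n + 2)) (PowerSeries.mk f * PowerSeries.rescale (-1) (PowerSeries.mk f))
      = ((-1 : ℚ) ^ n) • f (n + 2) + f (n + 2)
        + ∑ k ∈ Finset.range (n + 1), ((-1 : ℚ) ^ (n + 1 - k)) • (f (k + 1) * f (n + 1 - k)) := by
  rw [PowerSeries.coeff_mul, Finset.Nat.sum_antidiagonal_eq_sum_range_succ_mk]
  simp only [PowerSeries.coeff_rescale, PowerSeries.coeff_mk]
  rw [Finset.sum_range_succ', Finset.sum_range_succ]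
  have h1 : n + 2 - 0 = n + 2 := by omega
  have h2 : n + 2 - (n + 1 + 1) = 0 := by omega
  rw [h1, h2, hf0, pow_zero, one_mul, mul_one, one_mul, neg_pow_mul,
    show (-1 : ℚ) ^ (n + 2) = (-1 : ℚ) ^ n from by
      rw [pow_add, neg_one_sq, mul_one]]
  have h3 : ∀ k ∈ Finset.range (n + 1),
      f (k + 1) * ((-1 : A) ^ (n + 2 - (k + 1)) * f (n + 2 - (k + 1)))
        = ((-1 : ℚ) ^ (n + 1 - k)) • (f (k + 1) * f (n + 1 - k)) := by
    intro k hk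
    have e1 : n + 2 - (k + 1) = n + 1 - k := by omega
    rw [e1, neg_pow_mul, mul_smul_comm]
  rw [Finset.sum_congr rfl h3]
  abel

private lemma exp_mul_exp_neg {A : Type*} [CommRing A] [Algebra ℚ A] (E : A) :
    (PowerSeries.mk fun k => ((1 / k.factorial : ℚ)) • E ^ k)
      * PowerSeries.rescale (-1) (PowerSeries.mk fun k => ((1 / k.factorial : ℚ)) • E ^ k) = 1 := by
  ext N
  rw [PowerSeries.coeff_mul, Finset.Nat.sum_antidiagonal_eq_sum_range_succ_mk]
  simp only [PowerSeries.coeff_rescale, PowerSeries.coeff_mk]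
  rcases N with _ | m
  · simp
  · rw [PowerSeries.coeff_one, if_neg (Nat.succ_ne_zero m)]
    have h3 : ∀ k ∈ Finset.range (m + 2),
        ((1 / k.factorial : ℚ)) • E ^ k
          * ((-1 : A) ^ (m + 1 - k) * ((1 / (m + 1 - k).factorial : ℚ)) • E ^ (m + 1 - k))
        = ((-1 : ℚ) ^ (m + 1 - k) * (1 / (k.factorial * (m + 1 - k).factorial))) • E ^ (m + 1) := by
      intro k hk
      simp only [Finset.mem_range] at hk
      rw [neg_pow_mul, smul_smul, smul_mul_assoc, mul_smul_comm, smul_smul,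
        ← pow_add, show k + (m + 1 - k) = m + 1 from by omega]
      congr 1
      push_cast
      ring
    rw [Finset.sum_congr rfl h3, ← Finset.sum_smul]
    have hs : (∑ k ∈ Finset.range (m + 2),
        ((-1 : ℚ) ^ (m + 1 - k) * (1 / (k.factorial * (m + 1 - k).factorial)))) = 0 := by
      have hT := add_pow (1 : ℚ) (-1) (m + 1)
      rw [show (1 + -1 : ℚ) = 0 from by norm_num, zero_pow (Nat.succ_ne_zero m)] at hT
      have hstep : (∑ k ∈ Finset.range (m + 2),
          ((-1 : ℚ) ^ (m + 1 - k) * (1 / (k.factorial * (m + 1 - k).factorial))))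
          = (1 / ((m + 1).factorial) : ℚ) * ∑ k ∈ Finset.range (m + 2),
              (1 : ℚ) ^ k * (-1) ^ (m + 1 - k) * ((m + 1).choose k : ℚ) := by
        rw [Finset.mul_sum]
        refine Finset.sum_congr rfl (fun k hk => ?_)
        simp only [Finset.mem_range] at hk
        rw [one_pow, Nat.cast_choose ℚ (show k ≤ m + 1 by omega)]
        have h1 : ((k.factorial : ℚ)) ≠ 0 := Nat.cast_ne_zero.mpr k.factorial_ne_zero
        have h2 : (((m + 1 - k).factorial : ℚ)) ≠ 0 := Nat.cast_ne_zero.mpr (m + 1 - k).factorial_ne_zero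
        have h3 : (((m + 1).factorial : ℚ)) ≠ 0 := Nat.cast_ne_zero.mpr (m + 1).factorial_ne_zero
        field_simp
      rw [hstep, ← hT, mul_zero]
    rw [hs, zero_smul]

private def pfn {A : Type*} [CommRing A] [Algebra ℚ A] (g : ℕ → A) : ℕ → A
  | 0 => 1
  | (k + 1) => (1 / (k.factorial * (k + 1).factorial) : ℚ) • g k


private lemma hPQ {A : Type*} [CommRing A] [Algebra ℚ A]
    (D : Derivation ℚ A A) (E Λ : A)
    (hDE : D E = Λ + E ^ 2)
    (Ψ : ℕ → A)
    (hΨ0 : Ψ 0 = 0)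
    (hΨ1 : Ψ 1 = Λ)
    (hΨrec : ∀ j : ℕ, Ψ (j + 2) =
      (D (Ψ (j + 1)) - (2 * (j + 1 : ℕ) + 2 : ℚ) • (E * Ψ (j + 1)))
        + (((j + 1 : ℕ) * ((j + 1 : ℕ) + 1) : ℚ) • (Λ * Ψ j))) :
    PowerSeries.mk (pfn (fun k => (⇑D)^[k] E))
      = (PowerSeries.mk fun k => ((1 / k.factorial : ℚ)) • E ^ k) * PowerSeries.mk (pfn Ψ) := by
  ext N
  rw [PowerSeries.coeff_mul, Finset.Nat.sum_antidiagonal_eq_sum_range_succ_mk]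
  simp only [PowerSeries.coeff_mk]
  rcases N with _ | m
  · simp [pfn]
  · rw [Finset.sum_range_succ, show m + 1 - (m + 1) = 0 from by omega]
    have hz : (pfn Ψ 0 : A) = 1 := rfl
    rw [hz, mul_one]
    rw [← Finset.sum_range_reflect]
    have hcongr : ∀ j ∈ Finset.range (m + 1),
        ((1 / (m + 1 - 1 - j).factorial : ℚ)) • E ^ (m + 1 - 1 - j) * pfn Ψ (m + 1 - (m + 1 - 1 - j))
        = ((1 / (m - j).factorial : ℚ)) • E ^ (m - j)
            * ((1 / (j.factorial * (j + 1).factorial) : ℚ) • Ψ j) := by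
      intro j hj
      simp only [Finset.mem_range] at hj
      have e1 : m + 1 - 1 - j = m - j := by omega
      have e2 : m + 1 - (m - j) = j + 1 := by omega
      rw [e1, e2]
      rfl
    rw [Finset.sum_congr rfl hcongr]
    rw [Finset.sum_range_succ', hΨ0]
    simp only [smul_zero, mul_zero, add_zero]
    have hL := L1 D E Λ hDE Ψ hΨ0 hΨ1 hΨrec m
    have hpf : (pfn (fun k => (⇑D)^[k] E) (m + 1) : A)
        = (1 / (m.factorial * (m + 1).factorial) : ℚ) • ((⇑D)^[m] E) := rfl
    rw [hpf, hL, smul_add, Finset.smul_sum]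
    rw [add_comm]
    refine congrArg₂ HAdd.hAdd (Finset.sum_congr rfl (fun k hk => ?_)) ?_
    · simp only [Finset.mem_range] at hk
      have e1 : m - (k + 1) = m - 1 - k := by omega
      rw [e1]
      simp only [smul_mul_assoc, mul_smul_comm, smul_smul]
      congr 1
      unfold bco
      have h1 : ((m.factorial : ℚ)) ≠ 0 := Nat.cast_ne_zero.mpr m.factorial_ne_zero
      have h2 : (((m+1).factorial : ℚ)) ≠ 0 := Nat.cast_ne_zero.mpr (m+1).factorial_ne_zero
      have h3 : (((m-1-k).factorial : ℚ)) ≠ 0 := Nat.cast_ne_zero.mpr (m-1-k).factorial_ne_zero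
      have h4 : (((k+1).factorial : ℚ)) ≠ 0 := Nat.cast_ne_zero.mpr (k+1).factorial_ne_zero
      have h5 : (((k+2).factorial : ℚ)) ≠ 0 := Nat.cast_ne_zero.mpr (k+2).factorial_ne_zero
      field_simp
    · rw [smul_smul]
      congr 1
      have h1 : ((m.factorial : ℚ)) ≠ 0 := Nat.cast_ne_zero.mpr m.factorial_ne_zero
      have h2 : (((m+1).factorial : ℚ)) ≠ 0 := Nat.cast_ne_zero.mpr (m+1).factorial_ne_zero
      field_simp


private lemma keyId {A : Type*} [CommRing A] [Algebra ℚ A]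
    (D : Derivation ℚ A A) (E Λ : A)
    (hDE : D E = Λ + E ^ 2)
    (Ψ : ℕ → A)
    (hΨ0 : Ψ 0 = 0)
    (hΨ1 : Ψ 1 = Λ)
    (hΨrec : ∀ j : ℕ, Ψ (j + 2) =
      (D (Ψ (j + 1)) - (2 * (j + 1 : ℕ) + 2 : ℚ) • (E * Ψ (j + 1)))
        + (((j + 1 : ℕ) * ((j + 1 : ℕ) + 1) : ℚ) • (Λ * Ψ j))) (n : ℕ) :
    (1 + (-1 : ℚ) ^ n) • ((⇑D)^[n + 1] E)
      - ((n : ℚ) + 2) • ∑ j ∈ Finset.range (n + 1),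
        ((-1 : ℚ) ^ j * (((n + 1).choose (n - j) : ℕ) : ℚ) * (((n + 1).choose j : ℕ) : ℚ)) •
          ((⇑D)^[j] E * (⇑D)^[n - j] E)
    = (1 + (-1 : ℚ) ^ n) • Ψ (n + 1)
      - ((n : ℚ) + 2) • ∑ j ∈ Finset.range (n + 1),
        ((-1 : ℚ) ^ j * (((n + 1).choose (n - j) : ℕ) : ℚ) * (((n + 1).choose j : ℕ) : ℚ)) •
          (Ψ j * Ψ (n - j)) := by
  have hprod : PowerSeries.mk (pfn (fun k => (⇑D)^[k] E))
        * PowerSeries.rescale (-1) (PowerSeries.mk (pfn (fun k => (⇑D)^[k] E)))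
      = PowerSeries.mk (pfn Ψ) * PowerSeries.rescale (-1) (PowerSeries.mk (pfn Ψ)) := by
    rw [hPQ D E Λ hDE Ψ hΨ0 hΨ1 hΨrec, map_mul, mul_mul_mul_comm, exp_mul_exp_neg, one_mul]
  have extract := congrArg (PowerSeries.coeff (n + 2)) hprod
  rw [coeff_mul_resc _ rfl n, coeff_mul_resc _ rfl n] at extract
  -- convert sums
  have hx : (-1 : ℚ) ^ (n + 1) = (-1 : ℚ) ^ n * (-1) := pow_succ _ _
  have hA1 : (-1 : ℚ) ^ n * (-1) ^ n = 1 := by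
    rw [← pow_add]; exact Even.neg_one_pow ⟨n, rfl⟩
  have hSp : ∀ (g : ℕ → A), ∑ k ∈ Finset.range (n + 1),
        ((-1 : ℚ) ^ (n + 1 - k)) • (pfn g (k + 1) * pfn g (n + 1 - k))
      = ((-1 : ℚ) ^ n * (-1) * (((n : ℚ) + 2) /
          (((n + 1).factorial : ℚ) * ((n + 2).factorial : ℚ)))) •
        ∑ j ∈ Finset.range (n + 1),
          ((-1 : ℚ) ^ j * (((n + 1).choose (n - j) : ℕ) : ℚ) * (((n + 1).choose j : ℕ) : ℚ)) •
            (g j * g (n - j)) := by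
    intro g
    rw [Finset.smul_sum]
    refine Finset.sum_congr rfl (fun k hk => ?_)
    simp only [Finset.mem_range] at hk
    have e1 : n + 1 - k = (n - k) + 1 := by omega
    rw [e1]
    have hp1 : pfn g (k + 1) = (1 / (k.factorial * (k + 1).factorial) : ℚ) • g k := rfl
    have hp2 : pfn g ((n - k) + 1)
        = (1 / ((n - k).factorial * ((n - k) + 1).factorial) : ℚ) • g (n - k) := rfl
    rw [hp1, hp2]
    simp only [smul_mul_assoc, mul_smul_comm, smul_smul]
    congr 1
    -- scalar identity
    rw [Nat.cast_choose ℚ (show n - k ≤ n + 1 by omega),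
      Nat.cast_choose ℚ (show k ≤ n + 1 by omega),
      show n + 1 - (n - k) = k + 1 from by omega,
      show n + 1 - k = (n - k) + 1 from by omega]
    have hxk : (-1 : ℚ) ^ (n - k) = (-1) ^ n * (-1) ^ k := by
      have h1 : (-1 : ℚ) ^ n = (-1) ^ (n - k) * (-1) ^ k := by
        rw [← pow_add]; congr 1; omega
      have h2 : (-1 : ℚ) ^ k * (-1) ^ k = 1 := by
        rw [← pow_add]; exact Even.neg_one_pow ⟨k, rfl⟩
      rw [h1, mul_assoc, h2, mul_one]
    rw [pow_succ, hxk]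
    have h1 : ((k.factorial : ℚ)) ≠ 0 := Nat.cast_ne_zero.mpr k.factorial_ne_zero
    have h2 : (((k+1).factorial : ℚ)) ≠ 0 := Nat.cast_ne_zero.mpr (k+1).factorial_ne_zero
    have h3 : (((n-k).factorial : ℚ)) ≠ 0 := Nat.cast_ne_zero.mpr (n-k).factorial_ne_zero
    have h4 : (((n-k+1).factorial : ℚ)) ≠ 0 := Nat.cast_ne_zero.mpr (n-k+1).factorial_ne_zero
    have h5 : (((n+1).factorial : ℚ)) ≠ 0 := Nat.cast_ne_zero.mpr (n+1).factorial_ne_zero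
    have h6 : (((n+2).factorial : ℚ)) ≠ 0 := Nat.cast_ne_zero.mpr (n+2).factorial_ne_zero
    have hfs : ((n+2).factorial : ℚ) = ((n:ℚ) + 2) * ((n+1).factorial : ℚ) := by
      rw [show n + 2 = (n + 1) + 1 from rfl, Nat.factorial_succ]
      push_cast; ring
    field_simp
    rw [hfs]
  have h2e : pfn (fun k => (⇑D)^[k] E) (n + 2)
      = (1 / (((n + 1).factorial : ℚ) * ((n + 2).factorial : ℚ))) • ((⇑D)^[n + 1] E) := rfl
  have h2q : pfn Ψ (n + 2)
      = (1 / (((n + 1).factorial : ℚ) * ((n + 2).factorial : ℚ))) • Ψ (n + 1) := rfl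
  rw [hSp (fun k => (⇑D)^[k] E), hSp Ψ, h2e, h2q] at extract
  rw [← sub_eq_zero] at extract ⊢
  have hport : ((1 + (-1 : ℚ) ^ n) • ((⇑D)^[n + 1] E)
      - ((n : ℚ) + 2) • ∑ j ∈ Finset.range (n + 1),
        ((-1 : ℚ) ^ j * (((n + 1).choose (n - j) : ℕ) : ℚ) * (((n + 1).choose j : ℕ) : ℚ)) •
          ((⇑D)^[j] E * (⇑D)^[n - j] E)
      - ((1 + (-1 : ℚ) ^ n) • Ψ (n + 1)
      - ((n : ℚ) + 2) • ∑ j ∈ Finset.range (n + 1),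
        ((-1 : ℚ) ^ j * (((n + 1).choose (n - j) : ℕ) : ℚ) * (((n + 1).choose j : ℕ) : ℚ)) •
          (Ψ j * Ψ (n - j))))
      = ((-1 : ℚ) ^ n * (((n + 1).factorial : ℚ) * ((n + 2).factorial : ℚ))) •
        (((-1 : ℚ) ^ n • (1 / (((n + 1).factorial : ℚ) * ((n + 2).factorial : ℚ))) • ((⇑D)^[n + 1] E) +
          (1 / (((n + 1).factorial : ℚ) * ((n + 2).factorial : ℚ))) • ((⇑D)^[n + 1] E) +
          ((-1 : ℚ) ^ n * -1 * (((n : ℚ) + 2) / (((n + 1).factorial : ℚ) * ((n + 2).factorial : ℚ)))) •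
            ∑ j ∈ Finset.range (n + 1),
              ((-1 : ℚ) ^ j * (((n + 1).choose (n - j) : ℕ) : ℚ) * (((n + 1).choose j : ℕ) : ℚ)) •
                ((⇑D)^[j] E * (⇑D)^[n - j] E))
        - ((-1 : ℚ) ^ n • (1 / (((n + 1).factorial : ℚ) * ((n + 2).factorial : ℚ))) • Ψ (n + 1) +
          (1 / (((n + 1).factorial : ℚ) * ((n + 2).factorial : ℚ))) • Ψ (n + 1) +
          ((-1 : ℚ) ^ n * -1 * (((n : ℚ) + 2) / (((n + 1).factorial : ℚ) * ((n + 2).factorial : ℚ)))) •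
            ∑ j ∈ Finset.range (n + 1),
              ((-1 : ℚ) ^ j * (((n + 1).choose (n - j) : ℕ) : ℚ) * (((n + 1).choose j : ℕ) : ℚ)) •
                (Ψ j * Ψ (n - j)))) := by
    have h5 : (((n+1).factorial : ℚ)) ≠ 0 := Nat.cast_ne_zero.mpr (n+1).factorial_ne_zero
    have h6 : (((n+2).factorial : ℚ)) ≠ 0 := Nat.cast_ne_zero.mpr (n+2).factorial_ne_zero
    have hA2 : (-1 : ℚ) ^ (n * 2) = 1 := Even.neg_one_pow ⟨n, by ring⟩
    match_scalars
    · field_simp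
      linear_combination (-1 : ℚ) * hA2
    · field_simp
      linear_combination hA2
    · field_simp
      linear_combination hA2
    · field_simp
      linear_combination (-1 : ℚ) * hA2
  rw [hport, extract, smul_zero]

private lemma poch_fact (a b : ℕ) :
    poch ((a : ℚ) + 1) b * (a.factorial : ℚ) = (((a + b).factorial : ℕ) : ℚ) := by
  induction b with
  | zero => simp [poch]
  | succ b ih =>
    have : poch ((a : ℚ) + 1) (b + 1) = poch ((a : ℚ) + 1) b * ((a : ℚ) + 1 + b) := by
      rw [poch, poch, Finset.prod_range_succ]
    rw [this, show a + (b + 1) = (a + b) + 1 from by omega, Nat.factorial_succ]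
    push_cast
    ring_nf
    ring_nf at ih
    nlinarith [ih]

theorem stmt_5 {A : Type*} [CommRing A] [Algebra ℚ A]
    (D : Derivation ℚ A A) (E Λ : A)
    (hDE : D E = Λ + E ^ 2)
    (Ψ : ℕ → A)
    (hΨ0 : Ψ 0 = 0)
    (hΨ1 : Ψ 1 = Λ)
    (hΨrec : ∀ j : ℕ, Ψ (j + 2) =
      (D (Ψ (j + 1)) - (2 * (j + 1 : ℕ) + 2 : ℚ) • (E * Ψ (j + 1)))
        + (((j + 1 : ℕ) * ((j + 1 : ℕ) + 1) : ℚ) • (Λ * Ψ j)))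
    (n : ℕ)
    -- the `n`-th Rankin–Cohen bracket of `E` with itself (both of weight 2)
    (bracket : A)
    (hbracket : bracket = ∑ j ∈ Finset.range (n + 1),
      ((-1 : ℚ) ^ j * (poch (2 + j) (n - j) * poch (2 + (n : ℚ) - j) j /
        ((Nat.factorial j) * (Nat.factorial (n - j))))) •
        ((⇑D)^[j] E * (⇑D)^[n - j] E))
    (θ : A)
    (hθ : θ = ((1 + (-1 : ℚ) ^ n)) • (⇑D)^[n + 1] E - ((n : ℚ) + 2) • bracket) :
    θ ∈ Algebra.adjoin ℚ (Set.range Ψ) ∧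
    (Even n → θ =
      -(((n : ℚ) + 2) • ∑ j ∈ Finset.range (n + 1),
        ((-1 : ℚ) ^ j * (Nat.choose (n + 1) (n - j)) * (Nat.choose (n + 1) j)) •
          (Ψ j * Ψ (n - j)))
      + (2 : ℚ) • Ψ (n + 1)) ∧
    (Odd n → θ = 0) := by
  have hbr : bracket = ∑ j ∈ Finset.range (n + 1),
      ((-1 : ℚ) ^ j * (((n + 1).choose (n - j) : ℕ) : ℚ) * (((n + 1).choose j : ℕ) : ℚ)) •
        ((⇑D)^[j] E * (⇑D)^[n - j] E) := by
    rw [hbracket]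
    refine Finset.sum_congr rfl (fun j hj => ?_)
    simp only [Finset.mem_range] at hj
    have hj' : j ≤ n := by omega
    congr 1
    have hp1 : poch (2 + (j : ℚ)) (n - j) = poch (((j + 1 : ℕ) : ℚ) + 1) (n - j) := by
      congr 1
      push_cast
      ring
    have hp2 : poch (2 + (n : ℚ) - (j : ℚ)) j = poch (((n - j + 1 : ℕ) : ℚ) + 1) j := by
      congr 1
      push_cast [Nat.cast_sub hj']
      ring
    have q1 := poch_fact (j + 1) (n - j)
    have q2 := poch_fact (n - j + 1) j
    rw [show j + 1 + (n - j) = n + 1 from by omega] at q1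
    rw [show n - j + 1 + j = n + 1 from by omega] at q2
    have h2 : (((j + 1).factorial : ℚ)) ≠ 0 := Nat.cast_ne_zero.mpr (j + 1).factorial_ne_zero
    have h4 : (((n - j + 1).factorial : ℚ)) ≠ 0 := Nat.cast_ne_zero.mpr (n - j + 1).factorial_ne_zero
    have r1 : poch (((j + 1 : ℕ) : ℚ) + 1) (n - j)
        = (((n + 1).factorial : ℕ) : ℚ) / (((j + 1).factorial : ℕ) : ℚ) := by
      rw [eq_div_iff h2]; exact q1
    have r2 : poch (((n - j + 1 : ℕ) : ℚ) + 1) j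
        = (((n + 1).factorial : ℕ) : ℚ) / (((n - j + 1).factorial : ℕ) : ℚ) := by
      rw [eq_div_iff h4]; exact q2
    rw [hp1, hp2, r1, r2]
    rw [Nat.cast_choose ℚ (show n - j ≤ n + 1 by omega),
      Nat.cast_choose ℚ (show j ≤ n + 1 by omega),
      show n + 1 - (n - j) = j + 1 from by omega,
      show n + 1 - j = (n - j) + 1 from by omega]
    have h1 : ((j.factorial : ℚ)) ≠ 0 := Nat.cast_ne_zero.mpr j.factorial_ne_zero
    have h3 : (((n - j).factorial : ℚ)) ≠ 0 := Nat.cast_ne_zero.mpr (n - j).factorial_ne_zero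
    have h5 : (((n + 1).factorial : ℚ)) ≠ 0 := Nat.cast_ne_zero.mpr (n + 1).factorial_ne_zero
    field_simp
  have hθ' : θ = (1 + (-1 : ℚ) ^ n) • Ψ (n + 1)
      - ((n : ℚ) + 2) • ∑ j ∈ Finset.range (n + 1),
        ((-1 : ℚ) ^ j * (((n + 1).choose (n - j) : ℕ) : ℚ) * (((n + 1).choose j : ℕ) : ℚ)) •
          (Ψ j * Ψ (n - j)) := by
    rw [hθ, hbr]
    exact keyId D E Λ hDE Ψ hΨ0 hΨ1 hΨrec n
  refine ⟨?_, ?_, ?_⟩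
  · rw [hθ']
    refine sub_mem (Subalgebra.smul_mem _ (Algebra.subset_adjoin (Set.mem_range_self (n + 1))) _)
      (Subalgebra.smul_mem _ (sum_mem (fun j hj => Subalgebra.smul_mem _
        (mul_mem (Algebra.subset_adjoin (Set.mem_range_self j))
          (Algebra.subset_adjoin (Set.mem_range_self (n - j)))) _)) _)
  · intro hev
    rw [hθ', hev.neg_one_pow]
    norm_num
    abel
  · intro hodd
    rw [hθ', hodd.neg_one_pow]
    have hS : (∑ j ∈ Finset.range (n + 1),
        ((-1 : ℚ) ^ j * (((n + 1).choose (n - j) : ℕ) : ℚ) * (((n + 1).choose j : ℕ) : ℚ)) •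
          (Ψ j * Ψ (n - j))) = 0 := by
      set S := ∑ j ∈ Finset.range (n + 1),
        ((-1 : ℚ) ^ j * (((n + 1).choose (n - j) : ℕ) : ℚ) * (((n + 1).choose j : ℕ) : ℚ)) •
          (Ψ j * Ψ (n - j)) with hSdef
      have h2 : S + S = 0 := by
        nth_rewrite 1 [hSdef, ← Finset.sum_range_reflect]
        rw [hSdef, ← Finset.sum_add_distrib]
        refine Finset.sum_eq_zero (fun j hj => ?_)
        simp only [Finset.mem_range] at hj
        have hj' : j ≤ n := by omega
        have e1 : n + 1 - 1 - j = n - j := by omega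
        rw [e1, show n - (n - j) = j from by omega]
        rw [mul_comm (Ψ (n - j)) (Ψ j), ← add_smul]
        convert zero_smul ℚ (Ψ j * Ψ (n - j))
        have hh : (-1 : ℚ) ^ (n - j) = (-1) ^ n * (-1) ^ j := by
          have a1 : (-1 : ℚ) ^ n = (-1) ^ (n - j) * (-1) ^ j := by
            rw [← pow_add]; congr 1; omega
          have a2 : (-1 : ℚ) ^ j * (-1) ^ j = 1 := by
            rw [← pow_add]; exact Even.neg_one_pow ⟨j, rfl⟩
          rw [a1, mul_assoc, a2, mul_one]
        rw [hh, hodd.neg_one_pow]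
        ring
      have h3 : (1 / 2 : ℚ) • (S + S) = S := by module
      rw [← h3, h2, smul_zero]
    rw [hS]
    norm_num
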